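/- Let n ≥ 2 and let x_2,...,x_n and y_2,...,y_n be nonnegative integers with Σ x_i ≥ t+2 and Σ y_i ≥ t+2 for some integer t ≥ 5, and suppose min{x_i, y_i} ≤ 2 for every i ∈ [2, n]. Then for any nonnegative integers x_1, y_1, (Σ_{i=2}^n x_i)(Σ_{i=2}^n y_i) − Σ_{i=2}^n x_i y_i + x_1 + y_1 + 1 ≥ 4(t+1) + 2. -/

import Mathlib

/-- Auxiliary bound: the "cross term" `X*Y - ∑ xᵢyᵢ` is at least
`t * (∑_{yᵢ≤2} xᵢ) + (X - ∑_{yᵢ≤2} xᵢ) * (Y - ∑_{xᵢ≤2} yᵢ)`. -/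
lemma lemma6_aux (I : Finset ℕ) (t : ℤ) (ht : 5 ≤ t) (x y : ℕ → ℕ)
    (hY : t + 2 ≤ ∑ i ∈ I, (y i : ℤ))
    (hmin : ∀ i ∈ I, min (x i) (y i) ≤ 2) :
    t * (∑ i ∈ I.filter (fun i => y i ≤ 2), (x i : ℤ))
      + (∑ i ∈ I, (x i : ℤ) - ∑ i ∈ I.filter (fun i => y i ≤ 2), (x i : ℤ))
        * (∑ i ∈ I, (y i : ℤ) - ∑ i ∈ I.filter (fun i => x i ≤ 2), (y i : ℤ))
      ≤ (∑ i ∈ I, (x i : ℤ)) * (∑ i ∈ I, (y i : ℤ))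
          - ∑ i ∈ I, (x i : ℤ) * (y i : ℤ) := by
  set Y : ℤ := ∑ i ∈ I, (y i : ℤ) with hYdef
  set b : ℤ := ∑ i ∈ I.filter (fun i => x i ≤ 2), (y i : ℤ) with hbdef
  have key : (∑ i ∈ I, (x i : ℤ)) * Y - ∑ i ∈ I, (x i : ℤ) * (y i : ℤ)
      = ∑ i ∈ I, (x i : ℤ) * (Y - (y i : ℤ)) := by
    rw [Finset.sum_mul]
    rw [← Finset.sum_sub_distrib]
    congr 1
    ext i
    ring
  rw [key]
  rw [← Finset.sum_filter_add_sum_filter_not I (fun i => y i ≤ 2)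
      (fun i => (x i : ℤ) * (Y - (y i : ℤ)))]
  have hsplit : (∑ i ∈ I.filter (fun i => y i ≤ 2), (x i : ℤ))
      + ∑ i ∈ I.filter (fun i => ¬ y i ≤ 2), (x i : ℤ) = ∑ i ∈ I, (x i : ℤ) :=
    Finset.sum_filter_add_sum_filter_not I _ _
  have h1 : t * (∑ i ∈ I.filter (fun i => y i ≤ 2), (x i : ℤ))
      ≤ ∑ i ∈ I.filter (fun i => y i ≤ 2), (x i : ℤ) * (Y - (y i : ℤ)) := by
    rw [Finset.mul_sum]
    apply Finset.sum_le_sum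
    intro i hi
    rw [Finset.mem_filter] at hi
    have hy2 : (y i : ℤ) ≤ 2 := by exact_mod_cast hi.2
    have hxnn : (0:ℤ) ≤ (x i : ℤ) := by positivity
    have hty : t ≤ Y - (y i : ℤ) := by linarith
    rw [mul_comm]
    exact mul_le_mul_of_nonneg_left hty hxnn
  have h2 : (∑ i ∈ I, (x i : ℤ) - ∑ i ∈ I.filter (fun i => y i ≤ 2), (x i : ℤ))
        * (Y - b)
      ≤ ∑ i ∈ I.filter (fun i => ¬ y i ≤ 2), (x i : ℤ) * (Y - (y i : ℤ)) := by
    have heq : (∑ i ∈ I, (x i : ℤ)) - ∑ i ∈ I.filter (fun i => y i ≤ 2), (x i : ℤ)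
        = ∑ i ∈ I.filter (fun i => ¬ y i ≤ 2), (x i : ℤ) := by linarith
    rw [heq, Finset.sum_mul]
    apply Finset.sum_le_sum
    intro i hi
    rw [Finset.mem_filter] at hi
    have hxi : x i ≤ 2 := by
      have := hmin i hi.1
      omega
    have hib : i ∈ I.filter (fun i => x i ≤ 2) := Finset.mem_filter.mpr ⟨hi.1, hxi⟩
    have hyb : (y i : ℤ) ≤ b := by
      rw [hbdef]
      exact Finset.single_le_sum (f := fun j => (y j : ℤ)) (fun j _ => by positivity) hib
    apply mul_le_mul_of_nonneg_left _ (by positivity)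
    linarith
  linarith

/-- First case of the induction step of Lemma 6. -/
theorem lemma6_case1 (n t : ℕ) (hn : 2 ≤ n) (ht : 5 ≤ t) (x y : ℕ → ℕ)
    (hx : t + 2 ≤ ∑ i ∈ Finset.Icc 2 n, x i)
    (hy : t + 2 ≤ ∑ i ∈ Finset.Icc 2 n, y i)
    (hmin : ∀ i ∈ Finset.Icc 2 n, min (x i) (y i) ≤ 2)
    (x1 y1 : ℕ) :
    (4 * ((t : ℤ) + 1) + 2) ≤
      (∑ i ∈ Finset.Icc 2 n, (x i : ℤ)) * (∑ i ∈ Finset.Icc 2 n, (y i : ℤ))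
        - (∑ i ∈ Finset.Icc 2 n, (x i : ℤ) * (y i : ℤ)) + x1 + y1 + 1 := by
  set I := Finset.Icc 2 n with hI
  have hX : (t : ℤ) + 2 ≤ ∑ i ∈ I, (x i : ℤ) := by
    exact_mod_cast hx
  have hY : (t : ℤ) + 2 ≤ ∑ i ∈ I, (y i : ℤ) := by
    exact_mod_cast hy
  have htZ : (5 : ℤ) ≤ (t : ℤ) := by exact_mod_cast ht
  have hmin' : ∀ i ∈ I, min (y i) (x i) ≤ 2 := fun i hi => by
    have := hmin i hi; omega
  have h1 := lemma6_aux I t htZ x y hY hmin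
  have h2 := lemma6_aux I t htZ y x hX hmin'
  set X : ℤ := ∑ i ∈ I, (x i : ℤ)
  set Y : ℤ := ∑ i ∈ I, (y i : ℤ)
  set a : ℤ := ∑ i ∈ I.filter (fun i => y i ≤ 2), (x i : ℤ) with hadef
  set b : ℤ := ∑ i ∈ I.filter (fun i => x i ≤ 2), (y i : ℤ) with hbdef
  have hP : ∑ i ∈ I, (y i : ℤ) * (x i : ℤ) = ∑ i ∈ I, (x i : ℤ) * (y i : ℤ) := by
    apply Finset.sum_congr rfl
    intro i _
    ring
  rw [hP] at h2
  have ha0 : 0 ≤ a := Finset.sum_nonneg fun i _ => by positivity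
  have hb0 : 0 ≤ b := Finset.sum_nonneg fun i _ => by positivity
  have haX : a ≤ X :=
    Finset.sum_le_sum_of_subset_of_nonneg (Finset.filter_subset _ _)
      (fun i _ _ => by positivity)
  have hbY : b ≤ Y :=
    Finset.sum_le_sum_of_subset_of_nonneg (Finset.filter_subset _ _)
      (fun i _ _ => by positivity)
  have hx1 : (0 : ℤ) ≤ (x1 : ℤ) := by positivity
  have hy1 : (0 : ℤ) ≤ (y1 : ℤ) := by positivity
  set P : ℤ := ∑ i ∈ I, (x i : ℤ) * (y i : ℤ) with hPdef
  clear_value P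
  clear hP hPdef hadef hbdef hmin hx hy hI
  clear_value X Y a b
  have hS : 4 * (t : ℤ) + 5 ≤ X * Y - P := by
    rcases le_or_gt a 4 with ha4 | ha4
    · rcases le_or_gt b 4 with hb4 | hb4
      · rcases le_total a b with hab | hab
        · -- use h2 : t*b + (Y-b)*(X-a) ≤ S
          have hp : ((t : ℤ) + 2 - b) * ((t : ℤ) + 2 - b) ≤ (Y - b) * (X - a) :=
            mul_le_mul (by linarith) (by linarith) (by linarith) (by linarith)
          nlinarith [mul_nonneg (by linarith : (0:ℤ) ≤ (t:ℤ) - 5)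
              (by linarith : (0:ℤ) ≤ (t:ℤ) - b), sq_nonneg (2 * b - 9)]
        · -- use h1 : t*a + (X-a)*(Y-b) ≤ S
          have hp : ((t : ℤ) + 2 - a) * ((t : ℤ) + 2 - a) ≤ (X - a) * (Y - b) :=
            mul_le_mul (by linarith) (by linarith) (by linarith) (by linarith)
          nlinarith [mul_nonneg (by linarith : (0:ℤ) ≤ (t:ℤ) - 5)
              (by linarith : (0:ℤ) ≤ (t:ℤ) - a), sq_nonneg (2 * a - 9)]
      · nlinarith [mul_nonneg (by linarith : (0:ℤ) ≤ Y - b)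
            (by linarith : (0:ℤ) ≤ X - a),
          mul_nonneg (by linarith : (0:ℤ) ≤ b - 5) (by linarith : (0:ℤ) ≤ (t:ℤ))]
    · nlinarith [mul_nonneg (by linarith : (0:ℤ) ≤ X - a)
          (by linarith : (0:ℤ) ≤ Y - b),
        mul_nonneg (by linarith : (0:ℤ) ≤ a - 5) (by linarith : (0:ℤ) ≤ (t:ℤ))]
  linarith
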